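/- Fourier coefficients of the hyperplane-averaged function: Let d ≥ 2, let e be a unit vector in ℝ^d, and let u : ℝ^d → ℂ be continuous and ℤ^d-periodic. For t > 0 define Q(x,t) = ∫_{⟨e⟩^⊥} u(x + y) (4πt)^{-(d-1)/2} exp(−‖y‖²/(4t)) dℋ^{d-1}(y). Then Q(·,t) is continuous and ℤ^d-periodic, and for every k ∈ ℤ^d its Fourier coefficient satisfies ∫_{[0,1]^d} Q(x,t) e^{−2πi⟨k,x⟩} dx = û(k) · exp(−4π² ‖k − ⟨k,e⟩e‖² t), where û(k) = ∫_{[0,1]^d} u(x) e^{−2πi⟨k,x⟩} dx. -/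

import Mathlib

open Set Filter Topology MeasureTheory RealInnerProductSpace Pointwise

noncomputable section

abbrev Euc (d : ℕ) := EuclideanSpace ℝ (Fin d)

def IsIntVec {d : ℕ} (z : Euc d) : Prop := ∀ i, ∃ n : ℤ, z i = (n : ℝ)

def unitCube (d : ℕ) : Set (Euc d) := {y | ∀ i, y i ∈ Set.Icc (0:ℝ) 1}

namespace FHAux

variable {d : ℕ}

def stdB (d : ℕ) : Module.Basis (Fin d) ℝ (Euc d) := (EuclideanSpace.basisFun (Fin d) ℝ).toBasis

lemma fundamental_eq : ZSpan.fundamentalDomain (stdB d) = {x : Euc d | ∀ i, x i ∈ Set.Ico (0:ℝ) 1} := by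
  ext x
  simp [ZSpan.fundamentalDomain, stdB]

lemma int_of_mem_span {z : Euc d} (hz : z ∈ Submodule.span ℤ (Set.range ⇑(stdB d))) :
    IsIntVec z := by
  intro i
  rw [Module.Basis.mem_span_iff_repr_mem] at hz
  obtain ⟨n, hn⟩ := hz i
  exact ⟨n, by simpa [stdB] using hn.symm⟩

lemma hyperplane_null (i : Fin d) (c : ℝ) : volume {x : Euc d | x i = c} = 0 := by
  have h := EuclideanSpace.volume_preserving_symm_measurableEquiv_toLp (Fin d)
  have heq : {x : Euc d | x i = c} = (MeasurableEquiv.toLp 2 (Fin d → ℝ)).symm ⁻¹' {y : Fin d → ℝ | y i = c} := rfl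
  have hp : (volume : Measure (Fin d → ℝ)) {y : Fin d → ℝ | y i = c} = 0 := by
    rw [volume_pi]
    exact Measure.pi_hyperplane (fun _ : Fin d => (volume : Measure ℝ)) i c
  rw [heq, MeasurePreserving.measure_preimage h (NullMeasurableSet.of_null hp)]
  exact hp

lemma cube_ae : unitCube d =ᵐ[(volume : Measure (Euc d))] ZSpan.fundamentalDomain (stdB d) := by
  rw [Filter.eventuallyEq_set]
  have h1 : ∀ᵐ x : Euc d, ∀ i, x i ≠ 1 := by
    rw [MeasureTheory.ae_all_iff]
    intro i
    rw [ae_iff]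
    simpa using hyperplane_null i 1
  filter_upwards [h1] with x hx
  rw [fundamental_eq]
  constructor
  · intro h i
    rcases h i with ⟨h0, h1'⟩
    exact ⟨h0, lt_of_le_of_ne h1' (hx i)⟩
  · intro h i
    rcases h i with ⟨h0, h1'⟩
    exact ⟨h0, le_of_lt h1'⟩

lemma shift_integral (g : Euc d → ℂ) (hper : ∀ x z, IsIntVec z → g (x + z) = g x) (y : Euc d) :
    ∫ x in unitCube d, g (x + y) = ∫ x in unitCube d, g x := by
  set b := stdB d with hb
  set F := ZSpan.fundamentalDomain b with hF
  have hFD := ZSpan.isAddFundamentalDomain b (volume : Measure (Euc d))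
  haveI : VAddCommClass (Euc d) (↥(Submodule.span ℤ (Set.range ⇑b))) (Euc d) :=
    ⟨fun a γ x => by
      change a + ((γ : Euc d) + x) = (γ : Euc d) + (a + x)
      abel⟩
  have hFD' : IsAddFundamentalDomain (Submodule.span ℤ (Set.range ⇑b)) (y +ᵥ F) volume :=
    hFD.vadd_of_comm y
  have hinv : ∀ (γ : (Submodule.span ℤ (Set.range ⇑b))) (x : Euc d), g (γ +ᵥ x) = g x := by
    intro γ x
    have hint : IsIntVec (γ : Euc d) := int_of_mem_span γ.2
    rw [show γ +ᵥ x = x + (γ : Euc d) from add_comm _ _, hper x _ hint]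
  haveI : MeasurableVAdd (↥(Submodule.span ℤ (Set.range ⇑b))) (Euc d) :=
    { measurable_const_vadd := fun γ => show Measurable fun x : Euc d => (γ : Euc d) + x from measurable_const_add _,
      measurable_vadd_const := fun x => measurable_of_countable _ }
  haveI : VAddInvariantMeasure (↥(Submodule.span ℤ (Set.range ⇑b))) (Euc d) volume :=
    ⟨fun γ s hs => by
      have : (fun x : Euc d => γ +ᵥ x) ⁻¹' s = (fun x : Euc d => (γ : Euc d) + x) ⁻¹' s := rfl
      rw [this, measure_preimage_add]⟩
  have hca : unitCube d =ᵐ[(volume : Measure (Euc d))] F := cube_ae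
  calc ∫ x in unitCube d, g (x + y) = ∫ x in F, g (x + y) := setIntegral_congr_set hca
    _ = ∫ x in y +ᵥ F, g x := by
        have hmp : MeasurePreserving (fun x : Euc d => x + y) volume volume :=
          measurePreserving_add_right volume y
        have hemb : MeasurableEmbedding (fun x : Euc d => x + y) :=
          (MeasurableEquiv.addRight y).measurableEmbedding
        have hpre : (fun x : Euc d => x + y) ⁻¹' (y +ᵥ F) = F := by
          ext x
          simp only [Set.mem_preimage, Set.mem_vadd_set_iff_neg_vadd_mem, vadd_eq_add]
          constructor
          · intro h; convert h using 1; abel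
          · intro h; convert h using 1; abel
        have h2 := hmp.setIntegral_preimage_emb hemb g (y +ᵥ F)
        rw [hpre] at h2
        exact h2
    _ = ∫ x in F, g x := hFD'.setIntegral_eq hFD hinv
    _ = ∫ x in unitCube d, g x := (setIntegral_congr_set hca).symm

lemma cube_compact : IsCompact (unitCube d) := by
  have h : IsCompact (Set.pi Set.univ fun _ : Fin d => Set.Icc (0:ℝ) 1) :=
    isCompact_univ_pi fun _ => isCompact_Icc
  have h2 := h.image (EuclideanSpace.equiv (Fin d) ℝ).symm.continuous
  convert h2 using 1
  ext x
  constructor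
  · intro hx
    exact ⟨(EuclideanSpace.equiv (Fin d) ℝ) x, fun i _ => hx i, by simp⟩
  · rintro ⟨z, hz, rfl⟩ i
    simpa using hz i (Set.mem_univ i)

lemma u_bound (u : Euc d → ℂ) (hu : Continuous u)
    (huper : ∀ (x z : Euc d), IsIntVec z → u (x + z) = u x) :
    ∃ C : ℝ, 0 ≤ C ∧ ∀ x, ‖u x‖ ≤ C := by
  obtain ⟨C, hC⟩ := cube_compact.exists_bound_of_continuousOn hu.continuousOn
  refine ⟨max C 0, le_max_right _ _, fun x => ?_⟩
  set fr : Euc d := WithLp.toLp 2 (fun i => Int.fract (x i) : Fin d → ℝ) with hfr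
  set fl : Euc d := WithLp.toLp 2 (fun i => (⌊x i⌋ : ℝ) : Fin d → ℝ) with hfl
  have hx : x = fr + fl := by
    ext i
    have := Int.fract_add_floor (x i)
    simpa [hfr, hfl] using this.symm
  have hint : IsIntVec fl := fun i => ⟨⌊x i⌋, rfl⟩
  have hmem : fr ∈ unitCube d := fun i =>
    ⟨Int.fract_nonneg _, le_of_lt (Int.fract_lt_one _)⟩
  calc ‖u x‖ = ‖u fr‖ := by rw [hx, huper fr fl hint]
    _ ≤ C := hC fr hmem
    _ ≤ max C 0 := le_max_left _ _

lemma gauss_integrable {e : Euc d} {t : ℝ} (ht : 0 < t) :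
    Integrable (fun y : (ℝ ∙ e)ᗮ => Real.exp (-‖(y : Euc d)‖ ^ 2 / (4 * t))) := by
  have hb : (0:ℝ) < 1 / (4 * t) := by positivity
  have h := (GaussianFourier.integrable_cexp_neg_mul_sq_norm_add
    (V := (ℝ ∙ e)ᗮ) (b := ((1 / (4 * t) : ℝ) : ℂ)) (by simpa using hb) 0 0).norm
  convert h using 2 with y
  rw [Complex.norm_exp]
  congr 1
  have hnorm : ‖(y : Euc d)‖ = ‖y‖ := Submodule.coe_norm y
  simp only [inner_zero_left, Complex.ofReal_zero, zero_mul, add_zero, hnorm]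
  have : (-((1 / (4 * t) : ℝ) : ℂ) * (‖y‖ : ℂ) ^ 2) = (((-‖y‖ ^ 2 / (4 * t) : ℝ)) : ℂ) := by
    push_cast
    ring
  rw [this, Complex.ofReal_re]

end FHAux

/-- Fourier coefficients of the hyperplane-averaged function.  The hyperplane
⟨e⟩^⊥ is realized as the orthogonal complement (ℝ ∙ e)ᗮ with its canonical
(surface) measure as a finite-dimensional inner product space. -/
theorem fourier_coefficients_hyperplane_average (d : ℕ) (hd : 2 ≤ d)
    (e : Euc d) (he : ‖e‖ = 1)
    (u : Euc d → ℂ) (hu : Continuous u)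
    (huper : ∀ (x z : Euc d), IsIntVec z → u (x + z) = u x)
    (Q : Euc d → ℝ → ℂ)
    (hQ : ∀ (x : Euc d) (t : ℝ), Q x t =
      ∫ y : (ℝ ∙ e)ᗮ,
        u (x + (y : Euc d)) *
          (((4 * Real.pi * t) ^ (-((d : ℝ) - 1) / 2) *
            Real.exp (-‖(y : Euc d)‖ ^ 2 / (4 * t)) : ℝ) : ℂ)) :
    ∀ t > 0,
      Continuous (fun x => Q x t) ∧
      (∀ (x z : Euc d), IsIntVec z → Q (x + z) t = Q x t) ∧
      ∀ k : Euc d, IsIntVec k →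
        (∫ x in unitCube d,
            Q x t * Complex.exp (-(2 * Real.pi * Complex.I) * ((⟪k, x⟫ : ℝ) : ℂ)))
          = (∫ x in unitCube d,
              u x * Complex.exp (-(2 * Real.pi * Complex.I) * ((⟪k, x⟫ : ℝ) : ℂ)))
            * Complex.exp
              ((-(4 * Real.pi ^ 2 * ‖k - (⟪k, e⟫ : ℝ) • e‖ ^ 2 * t) : ℝ) : ℂ) := by
  intro t ht
  obtain ⟨C, hC0, hC⟩ := FHAux.u_bound u hu huper
  have hπt : (0:ℝ) < 4 * Real.pi * t := by positivity
  set c0 : ℝ := (4 * Real.pi * t) ^ (-((d : ℝ) - 1) / 2) with hc0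
  have hc0pos : 0 < c0 := Real.rpow_pos_of_pos hπt _
  set K : (ℝ ∙ e)ᗮ → ℂ :=
    fun y => ((c0 * Real.exp (-‖(y : Euc d)‖ ^ 2 / (4 * t)) : ℝ) : ℂ) with hK
  have hQ' : ∀ x, Q x t = ∫ y : (ℝ ∙ e)ᗮ, u (x + (y : Euc d)) * K y := fun x => hQ x t
  -- kernel facts
  have hKnn : ∀ y : (ℝ ∙ e)ᗮ, 0 ≤ c0 * Real.exp (-‖(y : Euc d)‖ ^ 2 / (4 * t)) :=
    fun y => mul_nonneg hc0pos.le (Real.exp_nonneg _)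
  have hKnorm : ∀ y : (ℝ ∙ e)ᗮ, ‖K y‖ = c0 * Real.exp (-‖(y : Euc d)‖ ^ 2 / (4 * t)) := by
    intro y
    rw [hK, Complex.norm_real, Real.norm_eq_abs, abs_of_nonneg (hKnn y)]
  have hKcont : Continuous K := by
    apply Complex.continuous_ofReal.comp
    exact continuous_const.mul (Real.continuous_exp.comp (by fun_prop))
  have hGint : Integrable
      (fun y : (ℝ ∙ e)ᗮ => c0 * Real.exp (-‖(y : Euc d)‖ ^ 2 / (4 * t))) :=
    (FHAux.gauss_integrable ht).const_mul c0
  refine ⟨?_, ?_, ?_⟩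
  · -- continuity
    have : (fun x => Q x t) = fun x => ∫ y : (ℝ ∙ e)ᗮ, u (x + (y : Euc d)) * K y :=
      funext hQ'
    rw [this]
    apply MeasureTheory.continuous_of_dominated
      (bound := fun y : (ℝ ∙ e)ᗮ => C * (c0 * Real.exp (-‖(y : Euc d)‖ ^ 2 / (4 * t))))
    · intro x
      apply Continuous.aestronglyMeasurable
      exact ((hu.comp (continuous_const.add continuous_subtype_val)).mul hKcont)
    · intro x
      filter_upwards with y
      rw [norm_mul, hKnorm y]
      exact mul_le_mul_of_nonneg_right (hC _) (hKnn y)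
    · exact hGint.const_mul C
    · filter_upwards with y
      exact (hu.comp (continuous_id.add continuous_const)).mul continuous_const
  · -- periodicity
    intro x z hz
    rw [hQ' (x + z), hQ' x]
    apply integral_congr_ae
    filter_upwards with y
    rw [add_right_comm, huper _ z hz]
  · -- Fourier coefficient
    intro k hk
    set E : Euc d → ℂ :=
      fun x => Complex.exp (-(2 * Real.pi * Complex.I) * ((⟪k, x⟫ : ℝ) : ℂ)) with hE
    have hkz : ∀ z : Euc d, IsIntVec z → ∃ n : ℤ, (⟪k, z⟫ : ℝ) = (n : ℝ) := by
      intro z hz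
      choose a ha using hk
      choose b hb using hz
      refine ⟨∑ i, a i * b i, ?_⟩
      rw [PiLp.inner_apply]
      push_cast
      refine Finset.sum_congr rfl fun i _ => ?_
      simp [ha i, hb i]
      ring
    have hEper : ∀ x z, IsIntVec z → E (x + z) = E x := by
      intro x z hz
      obtain ⟨n, hn⟩ := hkz z hz
      rw [hE]
      simp only
      rw [inner_add_right, hn]
      calc Complex.exp (-(2 * Real.pi * Complex.I) * (((⟪k, x⟫ : ℝ) + (n:ℝ) : ℝ) : ℂ))
          = Complex.exp (-(2 * Real.pi * Complex.I) * ((⟪k, x⟫ : ℝ) : ℂ)) *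
            Complex.exp ((-n : ℤ) * (2 * Real.pi * Complex.I)) := by
            rw [← Complex.exp_add]
            congr 1
            push_cast
            ring
        _ = Complex.exp (-(2 * Real.pi * Complex.I) * ((⟪k, x⟫ : ℝ) : ℂ)) := by
            rw [Complex.exp_int_mul_two_pi_mul_I, mul_one]
    have hE1 : ∀ x, ‖E x‖ = 1 := by
      intro x
      rw [hE]
      simp only
      rw [Complex.norm_exp]
      have : (-(2 * Real.pi * Complex.I) * ((⟪k, x⟫ : ℝ) : ℂ)).re = 0 := by
        simp [Complex.mul_re]
      rw [this, Real.exp_zero]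
    set g : Euc d → ℂ := fun x => u x * E x with hg
    have hgper : ∀ x z, IsIntVec z → g (x + z) = g x := by
      intro x z hz
      rw [hg]
      simp only
      rw [huper x z hz, hEper x z hz]
    set A : ℂ := ∫ x in unitCube d, g x with hA
    -- w and w'
    set w : Euc d := k - ((⟪k, e⟫ : ℝ)) • e with hw
    have hwmem : w ∈ (ℝ ∙ e)ᗮ := by
      rw [Submodule.mem_orthogonal]
      intro v hv
      rw [Submodule.mem_span_singleton] at hv
      obtain ⟨a, rfl⟩ := hv
      rw [real_inner_smul_left, hw, inner_sub_right, real_inner_smul_right]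
      rw [real_inner_self_eq_norm_sq, he]
      rw [real_inner_comm e k]
      ring
    set w' : (ℝ ∙ e)ᗮ := ⟨w, hwmem⟩ with hw'
    have hinner : ∀ y : (ℝ ∙ e)ᗮ, (⟪k, (y : Euc d)⟫ : ℝ) = (⟪w', y⟫ : ℝ) := by
      intro y
      rw [Submodule.coe_inner]
      have hey : (⟪e, (y : Euc d)⟫ : ℝ) = 0 := by
        have := y.2
        rw [Submodule.mem_orthogonal] at this
        exact this e (Submodule.mem_span_singleton_self e)
      show (⟪k, (y : Euc d)⟫ : ℝ) = ⟪w, (y : Euc d)⟫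
      rw [hw, inner_sub_left, real_inner_smul_left, hey]
      ring
    -- the Gaussian integral
    have hfr : Module.finrank ℝ (ℝ ∙ e)ᗮ = d - 1 := by
      have h1 : Module.finrank ℝ (ℝ ∙ e) = 1 := by
        apply finrank_span_singleton
        intro h
        rw [h] at he
        simp at he
      have h2 := Submodule.finrank_add_finrank_orthogonal (𝕜 := ℝ) (ℝ ∙ e)
      rw [h1, finrank_euclideanSpace_fin] at h2
      omega
    have hfrR : ((Module.finrank ℝ (ℝ ∙ e)ᗮ : ℕ) : ℝ) = (d : ℝ) - 1 := by
      rw [hfr]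
      have : (1:ℕ) ≤ d := le_trans one_le_two hd
      push_cast [Nat.cast_sub this]
      ring
    have hgauss : (∫ y : (ℝ ∙ e)ᗮ,
        Complex.exp ((2 * Real.pi * Complex.I) * ((⟪k, (y : Euc d)⟫ : ℝ) : ℂ)) * K y)
        = Complex.exp ((-(4 * Real.pi ^ 2 * ‖w‖ ^ 2 * t) : ℝ) : ℂ) := by
      have hbre : (0:ℝ) < ((1 / (4 * t) : ℝ) : ℂ).re := by
        simpa using (by positivity : (0:ℝ) < 1 / (4 * t))
      have key := GaussianFourier.integral_cexp_neg_mul_sq_norm_add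
        (V := (ℝ ∙ e)ᗮ) (b := ((1 / (4 * t) : ℝ) : ℂ)) hbre (2 * Real.pi * Complex.I) w'
      have hptw : ∀ y : (ℝ ∙ e)ᗮ,
          Complex.exp ((2 * Real.pi * Complex.I) * ((⟪k, (y : Euc d)⟫ : ℝ) : ℂ)) * K y
          = (c0 : ℂ) * Complex.exp (-((1 / (4 * t) : ℝ) : ℂ) * (‖y‖ : ℂ) ^ 2 +
              (2 * Real.pi * Complex.I) * ((⟪w', y⟫ : ℝ) : ℂ)) := by
        intro y
        rw [hinner y]
        have h2 : (-((1 / (4 * t) : ℝ) : ℂ) * (‖y‖ : ℂ) ^ 2)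
            = ((-‖(y : Euc d)‖ ^ 2 / (4 * t) : ℝ) : ℂ) := by
          rw [show ‖y‖ = ‖(y : Euc d)‖ from (Submodule.coe_norm y).symm]
          push_cast
          ring
        show Complex.exp (2 * (Real.pi : ℂ) * Complex.I * ((⟪w', y⟫ : ℝ) : ℂ)) *
            ((c0 * Real.exp (-‖(y : Euc d)‖ ^ 2 / (4 * t)) : ℝ) : ℂ) = _
        rw [Complex.exp_add, h2, ← Complex.ofReal_exp, Complex.ofReal_mul]
        ring
      rw [integral_congr_ae (Filter.Eventually.of_forall hptw), integral_const_mul, key]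
      -- now the numerics
      have hwnorm : ‖w'‖ = ‖w‖ := rfl
      have hπb : ((Real.pi : ℂ) / ((1 / (4 * t) : ℝ) : ℂ)) = ((4 * Real.pi * t : ℝ) : ℂ) := by
        have ht' : (t : ℂ) ≠ 0 := by
          simpa using ne_of_gt ht
        push_cast
        field_simp
      rw [hπb, hwnorm]
      have hcpow : (((4 * Real.pi * t : ℝ)) : ℂ) ^ ((Module.finrank ℝ (ℝ ∙ e)ᗮ : ℂ) / 2)
          = (((4 * Real.pi * t) ^ (((Module.finrank ℝ (ℝ ∙ e)ᗮ : ℝ)) / 2) : ℝ) : ℂ) := by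
        rw [Complex.ofReal_cpow hπt.le]
        push_cast
        ring_nf
      rw [hcpow]
      have hc0cancel : (c0 : ℂ) * (((4 * Real.pi * t) ^ (((Module.finrank ℝ (ℝ ∙ e)ᗮ : ℝ)) / 2) : ℝ) : ℂ) = 1 := by
        rw [← Complex.ofReal_mul]
        rw [hc0, ← Real.rpow_add hπt, hfrR]
        rw [show -((d : ℝ) - 1) / 2 + ((d : ℝ) - 1) / 2 = 0 by ring, Real.rpow_zero]
        norm_num
      have hexp : ((2 * Real.pi * Complex.I) ^ 2 * ((‖w‖ : ℝ) : ℂ) ^ 2 /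
          (4 * ((1 / (4 * t) : ℝ) : ℂ))) = ((-(4 * Real.pi ^ 2 * ‖w‖ ^ 2 * t) : ℝ) : ℂ) := by
        have ht' : ((4 * t : ℝ) : ℂ) ≠ 0 :=
          Complex.ofReal_ne_zero.mpr (by positivity)
        push_cast at ht' ⊢
        rw [mul_pow, mul_pow, Complex.I_sq]
        field_simp
        ring
      rw [← mul_assoc, hc0cancel, one_mul, hexp]
    -- product integrability for Fubini
    haveI hfin : IsFiniteMeasure ((volume : Measure (Euc d)).restrict (unitCube d)) := by
      constructor
      rw [Measure.restrict_apply_univ]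
      exact FHAux.cube_compact.measure_lt_top
    have hInt : Integrable
        (Function.uncurry fun x (y : (ℝ ∙ e)ᗮ) => u (x + (y : Euc d)) * K y * E x)
        (((volume : Measure (Euc d)).restrict (unitCube d)).prod volume) := by
      have hcont : Continuous fun p : Euc d × (ℝ ∙ e)ᗮ =>
          u (p.1 + (p.2 : Euc d)) * K p.2 * E p.1 := by
        apply Continuous.mul
        apply Continuous.mul
        · exact hu.comp (continuous_fst.add (continuous_subtype_val.comp continuous_snd))
        · exact hKcont.comp continuous_snd
        · rw [hE]
          apply Complex.continuous_exp.comp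
          apply Continuous.mul continuous_const
          apply Complex.continuous_ofReal.comp
          exact (Continuous.inner continuous_const continuous_id).comp continuous_fst
      apply Integrable.mono'
        (g := fun p : Euc d × (ℝ ∙ e)ᗮ =>
          (fun _ : Euc d => C) p.1 * ((fun y : (ℝ ∙ e)ᗮ =>
            c0 * Real.exp (-‖(y : Euc d)‖ ^ 2 / (4 * t))) p.2))
      · exact Integrable.mul_prod (integrable_const C) hGint
      · exact hcont.aestronglyMeasurable
      · filter_upwards with p
        show ‖u (p.1 + (p.2 : Euc d)) * K p.2 * E p.1‖ ≤ _
        rw [norm_mul, norm_mul, hKnorm, hE1, mul_one]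
        exact mul_le_mul_of_nonneg_right (hC _) (hKnn _)
    -- main chain
    calc (∫ x in unitCube d, Q x t * E x)
        = ∫ x in unitCube d, ∫ y : (ℝ ∙ e)ᗮ, u (x + (y : Euc d)) * K y * E x := by
          apply integral_congr_ae
          filter_upwards with x
          rw [hQ' x]
          exact (integral_mul_const _ _).symm
      _ = ∫ y : (ℝ ∙ e)ᗮ, ∫ x in unitCube d, u (x + (y : Euc d)) * K y * E x :=
          integral_integral_swap hInt
      _ = ∫ y : (ℝ ∙ e)ᗮ, A * (Complex.exp ((2 * Real.pi * Complex.I) *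
            ((⟪k, (y : Euc d)⟫ : ℝ) : ℂ)) * K y) := by
          apply integral_congr_ae
          filter_upwards with y
          have h1 : ∀ x : Euc d, u (x + (y : Euc d)) * K y * E x
              = g (x + (y : Euc d)) * (Complex.exp ((2 * Real.pi * Complex.I) *
                ((⟪k, (y : Euc d)⟫ : ℝ) : ℂ)) * K y) := by
            intro x
            have hEsplit : E (x + (y : Euc d)) = E x *
                Complex.exp (-(2 * Real.pi * Complex.I) * ((⟪k, (y : Euc d)⟫ : ℝ) : ℂ)) := by
              rw [hE]
              simp only
              rw [inner_add_right, ← Complex.exp_add]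
              congr 1
              push_cast
              ring
            have hcancel : Complex.exp (-(2 * Real.pi * Complex.I) * ((⟪k, (y : Euc d)⟫ : ℝ) : ℂ)) *
                Complex.exp ((2 * Real.pi * Complex.I) * ((⟪k, (y : Euc d)⟫ : ℝ) : ℂ)) = 1 := by
              rw [← Complex.exp_add, show -(2 * Real.pi * Complex.I) * ((⟪k, (y : Euc d)⟫ : ℝ) : ℂ) +
                (2 * Real.pi * Complex.I) * ((⟪k, (y : Euc d)⟫ : ℝ) : ℂ) = 0 by ring,
                Complex.exp_zero]
            rw [hg]
            simp only
            rw [hEsplit]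
            calc u (x + (y : Euc d)) * K y * E x
                = u (x + (y : Euc d)) * E x * K y *
                  (Complex.exp (-(2 * Real.pi * Complex.I) * ((⟪k, (y : Euc d)⟫ : ℝ) : ℂ)) *
                   Complex.exp ((2 * Real.pi * Complex.I) * ((⟪k, (y : Euc d)⟫ : ℝ) : ℂ))) := by
                  rw [hcancel, mul_one]
                  ring
              _ = u (x + (y : Euc d)) *
                  (E x * Complex.exp (-(2 * Real.pi * Complex.I) * ((⟪k, (y : Euc d)⟫ : ℝ) : ℂ))) *
                  (Complex.exp ((2 * Real.pi * Complex.I) * ((⟪k, (y : Euc d)⟫ : ℝ) : ℂ)) * K y) := by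
                  ring
          calc (∫ x in unitCube d, u (x + (y : Euc d)) * K y * E x)
              = ∫ x in unitCube d, g (x + (y : Euc d)) * (Complex.exp ((2 * Real.pi * Complex.I) *
                  ((⟪k, (y : Euc d)⟫ : ℝ) : ℂ)) * K y) := by
                apply integral_congr_ae
                filter_upwards with x
                exact h1 x
            _ = (∫ x in unitCube d, g (x + (y : Euc d))) * (Complex.exp ((2 * Real.pi * Complex.I) *
                  ((⟪k, (y : Euc d)⟫ : ℝ) : ℂ)) * K y) := integral_mul_const _ _
            _ = A * (Complex.exp ((2 * Real.pi * Complex.I) *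
                  ((⟪k, (y : Euc d)⟫ : ℝ) : ℂ)) * K y) := by
                rw [FHAux.shift_integral g hgper (y : Euc d), hA]
      _ = A * ∫ y : (ℝ ∙ e)ᗮ, Complex.exp ((2 * Real.pi * Complex.I) *
            ((⟪k, (y : Euc d)⟫ : ℝ) : ℂ)) * K y := integral_const_mul _ _
      _ = A * Complex.exp ((-(4 * Real.pi ^ 2 * ‖w‖ ^ 2 * t) : ℝ) : ℂ) := by rw [hgauss]

end
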